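/- arXiv:2601.21131 — 2 statements merged into one kernel-verified Lean document; each statement's English description precedes it below -/
import Mathlib

section
/- Suppose Φ*(z) < 1 for every z ∈ ℝ. Then for every arm a ∈ [K], every n ≥ 0, and every noise realization {ξ_{a;i}} ∈ E_ξ(∞) (i.e., belonging to E_ξ(x) for some finite x), the hitting time τ_{a;n} is conditionally almost surely finite, and n_{a;τ_{a;n}} = n holds conditionally almost surely: P^ξ(τ_{a;n} < ∞) = P^ξ(n_{a;τ_{a;n}} = n) = 1. -/
open MeasureTheory ProbabilityTheory Filter

namespace ThompsonSamplingCond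

variable {Ω : Type*} [MeasurableSpace Ω] {K : ℕ}

/-- `n_{a;t}`: number of pulls of arm `a` in rounds `1,…,t`. -/
def pulls (A : ℕ → Ω → Fin K) (a : Fin K) (t : ℕ) (ω : Ω) : ℕ :=
  ∑ s ∈ Finset.Icc 1 t, if A s ω = a then 1 else 0

/-- Conditional-on-noise model (`σ = 1`): the reward obtained from the `i`-th pull of arm
`a` is `R_{a,i} = μ_a + ξ_{a;i}` with a *fixed* noise array `ξ`, so the reward earned at
round `s` is `μ_{A_s} + ξ_{A_s; n_{A_s;s}}`.  This is `μ̄_{a;t}`, the prior-regularized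
empirical mean of arm `a` after round `t` (with `n̄_{a;t} = n_{a;t}+1`). -/
noncomputable def empMean (μarm : Fin K → ℝ) (ξ : Fin K → ℕ → ℝ)
    (A : ℕ → Ω → Fin K) (a : Fin K) (t : ℕ) (ω : Ω) : ℝ :=
  (∑ s ∈ Finset.Icc 1 t, if A s ω = a then μarm a + ξ a (pulls A a s ω) else 0) /
    (pulls A a t ω + 1)

/-- The Thompson sampling index `θ̄_{a;t} = μ̄_{a;t-1} + Z_{a;t}/√(n̄_{a;t-1})` (`σ = 1`). -/
noncomputable def tsIndex (μarm : Fin K → ℝ) (ξ : Fin K → ℕ → ℝ)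
    (Z : Fin K → ℕ → Ω → ℝ) (A : ℕ → Ω → Fin K) (a : Fin K) (t : ℕ) (ω : Ω) : ℝ :=
  empMean μarm ξ A a (t - 1) ω + Z a t ω / Real.sqrt ((pulls A a (t - 1) ω : ℝ) + 1)

/-- The conditional-on-noise Thompson sampling model: the sampling variables
`{Z_{a;t}}_{a∈[K],t≥1}` are i.i.d. with law `μZ`, everything is measurable, and at each
round `t ≥ 1` the selected arm `A_t` maximizes the Thompson sampling index. -/
def IsCondTSModel (P : Measure Ω) (μarm : Fin K → ℝ) (ξ : Fin K → ℕ → ℝ)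
    (Z : Fin K → ℕ → Ω → ℝ) (A : ℕ → Ω → Fin K) (μZ : Measure ℝ) : Prop :=
  (∀ a t, Measurable (Z a t)) ∧ (∀ t, Measurable (A t)) ∧
  iIndepFun
    (fun p : Fin K × {t : ℕ // 1 ≤ t} => Z p.1 p.2) P ∧
  (∀ (a : Fin K) (t : ℕ), 1 ≤ t → Measure.map (Z a t) P = μZ) ∧
  (∀ ω : Ω, ∀ t : ℕ, 1 ≤ t → ∀ b : Fin K,
    tsIndex μarm ξ Z A b t ω ≤ tsIndex μarm ξ Z A (A t ω) t ω)

/-- `ℱ^Z_t`: the σ-algebra generated by the sampling variables `{Z_{a;s} : a∈[K], s∈[t]}`. -/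
def FZ (Z : Fin K → ℕ → Ω → ℝ) (t : ℕ) : MeasurableSpace Ω :=
  ⨆ (a : Fin K) (s : ℕ) (_ : 1 ≤ s) (_ : s ≤ t), MeasurableSpace.comap (Z a s) inferInstance

/-- `𝔭^ξ_{a;t} = P^ξ(A_t = a | ℱ^Z_{t−1})`: the conditional pull probability. -/
noncomputable def pullProb (P : Measure Ω) (Z : Fin K → ℕ → Ω → ℝ)
    (A : ℕ → Ω → Fin K) (a : Fin K) (t : ℕ) : Ω → ℝ :=
  MeasureTheory.condExp (FZ Z (t - 1)) P (fun ω => if A t ω = a then (1 : ℝ) else 0)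

/-- The event `E_ξ(x)` on noise realizations:
`max_a sup_{t≥1} |(t+1)^{-1/2} (log((t+1)∨e))^{-1} Σ_{i∈[t]} ξ_{a;i}| < x`. -/
def noiseEvent (ξ : Fin K → ℕ → ℝ) (x : ℝ) : Prop :=
  ∀ a : Fin K, ∀ t : ℕ, 1 ≤ t →
    |∑ i ∈ Finset.Icc 1 t, ξ a i| <
      x * Real.sqrt ((t : ℝ) + 1) * Real.log (max ((t : ℝ) + 1) (Real.exp 1))

/-- `Φ`, the c.d.f. of the sampling distribution. -/
noncomputable def cdf (μZ : Measure ℝ) (z : ℝ) : ℝ := (μZ (Set.Iic z)).toReal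

/-- `Φ̄ = 1 − Φ`. -/
noncomputable def sf (μZ : Measure ℝ) (z : ℝ) : ℝ := 1 - cdf μZ z

/-- `Φ*(z) = sup_{a²+a'²=1} P(aZ + a'Z' ≤ z)` for `Z, Z'` i.i.d. with law `μZ`. -/
noncomputable def cdfStar (μZ : Measure ℝ) (z : ℝ) : ℝ :=
  ⨆ v : {v : ℝ × ℝ // v.1 ^ 2 + v.2 ^ 2 = 1},
    ((μZ.prod μZ) {p : ℝ × ℝ | v.1.1 * p.1 + v.1.2 * p.2 ≤ z}).toReal

/-- `Φ̄* = 1 − Φ*`. -/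
noncomputable def sfStar (μZ : Measure ℝ) (z : ℝ) : ℝ := 1 - cdfStar μZ z

/-- `Φ̄*⁻(u) = inf{x : Φ̄*(x) ≤ u}`, the generalized inverse of `Φ̄*`. -/
noncomputable def sfStarInv (μZ : Measure ℝ) (u : ℝ) : ℝ := sInf {x : ℝ | sfStar μZ x ≤ u}

/-- Assumption (B1). -/
def AssumptionB1 (μZ : Measure ℝ) : Prop :=
  IsProbabilityMeasure μZ ∧
  (∀ z : ℝ, 0 < cdf μZ z ∧ cdf μZ z < 1) ∧
  ∃ φ : ℝ → ℝ, (∀ z, HasDerivAt (cdf μZ) (φ z) z) ∧ Continuous φ ∧ ∃ C : ℝ, ∀ z, |φ z| ≤ C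

/-- Assumption (B2). -/
def AssumptionB2 (μZ : Measure ℝ) : Prop :=
  Tendsto (fun z : ℝ => Real.log z / (- Real.log (cdf μZ (-z)))) atTop (nhds 0) ∧
  ∀ c : ℝ, 1 < c →
    Tendsto (fun z : ℝ => max (Real.log z / (- Real.log (sf μZ z)))
      (z ^ 2 * sf μZ (c * z) / sf μZ z)) atTop (nhds 0)
/-- `τ_{a;n} = inf{t ≥ 0 : n_{a;t} ≥ n}`: the round of the `n`-th pull of arm `a`
(`⊤` if arm `a` is never pulled `n` times; `τ_{a;0} = 0`). -/
noncomputable def hitTime (A : ℕ → Ω → Fin K) (a : Fin K) (n : ℕ) (ω : Ω) : ℕ∞ :=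
  sInf ((fun t : ℕ => (t : ℕ∞)) '' {t : ℕ | n ≤ pulls A a t ω})

/-! ### Auxiliary lemmas -/

open scoped ENNReal

lemma pulls_zero (A : ℕ → Ω → Fin K) (a : Fin K) (ω : Ω) : pulls A a 0 ω = 0 := by
  simp [pulls]

lemma pulls_succ (A : ℕ → Ω → Fin K) (a : Fin K) (t : ℕ) (ω : Ω) :
    pulls A a (t + 1) ω = pulls A a t ω + (if A (t + 1) ω = a then 1 else 0) := by
  unfold pulls
  rw [Finset.sum_Icc_succ_top (by omega : 1 ≤ t + 1)]

lemma pulls_mono (A : ℕ → Ω → Fin K) (a : Fin K) {t t' : ℕ} (h : t ≤ t') (ω : Ω) :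
    pulls A a t ω ≤ pulls A a t' ω :=
  Finset.sum_le_sum_of_subset (Finset.Icc_subset_Icc_right h)

lemma sum_reward (μarm : Fin K → ℝ) (ξ : Fin K → ℕ → ℝ) (A : ℕ → Ω → Fin K)
    (b : Fin K) (ω : Ω) :
    ∀ t : ℕ, (∑ s ∈ Finset.Icc 1 t, if A s ω = b then μarm b + ξ b (pulls A b s ω) else 0)
      = (pulls A b t ω : ℝ) * μarm b + ∑ i ∈ Finset.Icc 1 (pulls A b t ω), ξ b i
  | 0 => by simp [pulls]
  | (t + 1) => by
    rw [Finset.sum_Icc_succ_top (by omega : 1 ≤ t + 1), sum_reward μarm ξ A b ω t,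
      pulls_succ A b t ω]
    by_cases h : A (t + 1) ω = b
    · rw [if_pos h, if_pos h]
      rw [Finset.sum_Icc_succ_top (by omega : 1 ≤ pulls A b t ω + 1)]
      push_cast
      ring
    · rw [if_neg h, if_neg h]
      simp

/-- `log (max y e) ≤ 4 √y` for `y ≥ 1`. -/
lemma log_max_le_sqrt {y : ℝ} (hy : 1 ≤ y) :
    Real.log (max y (Real.exp 1)) ≤ 4 * Real.sqrt y := by
  set m := max y (Real.exp 1) with hm
  have hepos : (0:ℝ) < Real.exp 1 := Real.exp_pos 1
  have hmpos : 0 < m := lt_of_lt_of_le (by linarith) (le_max_left _ _)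
  have hsq : Real.sqrt m > 0 := Real.sqrt_pos.2 hmpos
  have h1 : Real.log m ≤ 2 * Real.sqrt m := by
    have := Real.log_le_sub_one_of_pos hsq
    rw [Real.log_sqrt hmpos.le] at this
    linarith
  have hele : Real.exp 1 ≤ 4 := by
    have := Real.exp_one_lt_d9
    linarith
  have hmle : m ≤ y * 4 := by
    refine max_le (by nlinarith) (by nlinarith)
  have h2 : Real.sqrt m ≤ Real.sqrt y * 2 := by
    have := Real.sqrt_le_sqrt hmle
    rw [Real.sqrt_mul (by linarith : (0:ℝ) ≤ y)] at this
    have h4 : Real.sqrt (4:ℝ) = 2 := by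
      rw [show (4:ℝ) = 2 ^ 2 by norm_num, Real.sqrt_sq (by norm_num : (0:ℝ) ≤ 2)]
    rw [h4] at this
    exact this
  linarith

/-- Uniform bound on the prior-regularized empirical means on the noise event. -/
lemma abs_empMean_le (μarm : Fin K → ℝ) (ξ : Fin K → ℕ → ℝ) (A : ℕ → Ω → Fin K)
    (b : Fin K) (t : ℕ) (ω : Ω) {x : ℝ} (hx : noiseEvent ξ x) (hx1 : 1 ≤ x) :
    |empMean μarm ξ A b t ω| ≤ (∑ c, |μarm c|) + 4 * x := by
  set p := pulls A b t ω with hp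
  have hp1 : (0:ℝ) < (p : ℝ) + 1 := by positivity
  have hξp : |∑ i ∈ Finset.Icc 1 p, ξ b i| ≤ 4 * x * ((p : ℝ) + 1) := by
    rcases Nat.eq_zero_or_pos p with h | h
    · simp only [h]
      norm_num
      nlinarith
    · have hev := hx b p h
      have hy1 : (1:ℝ) ≤ (p : ℝ) + 1 := by
        have : (1:ℝ) ≤ (p:ℝ) := by exact_mod_cast h
        linarith
      have hlog := log_max_le_sqrt hy1
      have hs : Real.sqrt ((p:ℝ)+1) * Real.sqrt ((p:ℝ)+1) = (p:ℝ)+1 :=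
        Real.mul_self_sqrt (by linarith)
      have hsn : 0 ≤ Real.sqrt ((p:ℝ)+1) := Real.sqrt_nonneg _
      have hxs : 0 ≤ x * Real.sqrt ((p:ℝ)+1) := by nlinarith
      calc |∑ i ∈ Finset.Icc 1 p, ξ b i|
          ≤ x * Real.sqrt ((p:ℝ)+1) * Real.log (max ((p:ℝ)+1) (Real.exp 1)) := le_of_lt hev
        _ ≤ x * Real.sqrt ((p:ℝ)+1) * (4 * Real.sqrt ((p:ℝ)+1)) := by
            have hlognn : 0 ≤ Real.log (max ((p:ℝ)+1) (Real.exp 1)) := by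
              apply Real.log_nonneg
              exact le_trans hy1 (le_max_left _ _)
            exact mul_le_mul_of_nonneg_left hlog hxs
        _ = 4 * x * ((p:ℝ)+1) := by nlinarith
  have hμb : |μarm b| ≤ ∑ c, |μarm c| :=
    Finset.single_le_sum (fun c _ => abs_nonneg (μarm c)) (Finset.mem_univ b)
  have hnum : |(p : ℝ) * μarm b + ∑ i ∈ Finset.Icc 1 p, ξ b i|
      ≤ ((∑ c, |μarm c|) + 4 * x) * ((p:ℝ)+1) := by
    calc |(p : ℝ) * μarm b + ∑ i ∈ Finset.Icc 1 p, ξ b i|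
        ≤ |(p : ℝ) * μarm b| + |∑ i ∈ Finset.Icc 1 p, ξ b i| := abs_add_le _ _
      _ ≤ (p:ℝ) * |μarm b| + 4 * x * ((p:ℝ)+1) := by
          rw [abs_mul, abs_of_nonneg (by positivity : (0:ℝ) ≤ (p:ℝ))]
          linarith
      _ ≤ ((∑ c, |μarm c|) + 4 * x) * ((p:ℝ)+1) := by nlinarith [abs_nonneg (μarm b)]
  unfold empMean
  rw [sum_reward μarm ξ A b ω t, ← hp]
  rw [abs_div, abs_of_pos hp1, div_le_iff₀ hp1]
  exact hnum

/-- On a good round (arm `a`'s sample huge, the others' nonpositive), arm `a` is pulled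
as long as it has fewer than `n` pulls. -/
lemma good_round_pull (μarm : Fin K → ℝ) (ξ : Fin K → ℕ → ℝ)
    (Z : Fin K → ℕ → Ω → ℝ) (A : ℕ → Ω → Fin K)
    (hargmax : ∀ ω : Ω, ∀ t : ℕ, 1 ≤ t → ∀ b : Fin K,
      tsIndex μarm ξ Z A b t ω ≤ tsIndex μarm ξ Z A (A t ω) t ω)
    {x : ℝ} (hx : noiseEvent ξ x) (hx1 : 1 ≤ x) (a : Fin K) (n : ℕ) (ω : Ω) (t : ℕ)
    (hp : pulls A a t ω < n)
    (hZa : 3 * ((∑ c, |μarm c|) + 4 * x + 1) * Real.sqrt n < Z a (t + 1) ω)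
    (hZb : ∀ b, b ≠ a → Z b (t + 1) ω ≤ 0) :
    A (t + 1) ω = a := by
  set C₀ := (∑ c, |μarm c|) + 4 * x with hC₀def
  have hC₀ : 0 ≤ C₀ := by
    have : 0 ≤ ∑ c, |μarm c| := Finset.sum_nonneg fun c _ => abs_nonneg _
    simp only [hC₀def]; linarith
  by_contra hA
  have hmean : ∀ b s, |empMean μarm ξ A b s ω| ≤ C₀ := fun b s =>
    abs_empMean_le μarm ξ A b s ω hx hx1
  -- upper bound on the index of the chosen arm, which is not `a`
  have hupper : tsIndex μarm ξ Z A (A (t+1) ω) (t+1) ω ≤ C₀ := by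
    unfold tsIndex
    have hz : Z (A (t+1) ω) (t+1) ω ≤ 0 := hZb _ hA
    have hsp : 0 < Real.sqrt ((pulls A (A (t+1) ω) ((t+1)-1) ω : ℝ) + 1) :=
      Real.sqrt_pos.2 (by positivity)
    have hdiv : Z (A (t+1) ω) (t+1) ω / Real.sqrt ((pulls A (A (t+1) ω) ((t+1)-1) ω : ℝ) + 1)
        ≤ 0 := div_nonpos_iff.2 (Or.inr ⟨hz, hsp.le⟩)
    have := (abs_le.1 (hmean (A (t+1) ω) ((t+1)-1))).2
    linarith
  -- lower bound on the index of arm `a`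
  have hn1 : 1 ≤ n := by omega
  have hsqn : (0:ℝ) < Real.sqrt n := Real.sqrt_pos.2 (by exact_mod_cast hn1)
  set p := pulls A a t ω with hpdef
  have hsple : Real.sqrt ((p : ℝ) + 1) ≤ Real.sqrt n := by
    apply Real.sqrt_le_sqrt
    have : (p:ℝ) + 1 ≤ (n:ℝ) := by exact_mod_cast hp
    linarith
  have hsppos : (0:ℝ) < Real.sqrt ((p : ℝ) + 1) := Real.sqrt_pos.2 (by positivity)
  set M := 3 * (C₀ + 1) * Real.sqrt n with hMdef
  have hMnn : 0 ≤ M := by positivity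
  have hstep1 : M / Real.sqrt n ≤ M / Real.sqrt ((p:ℝ)+1) :=
    div_le_div_of_nonneg_left hMnn hsppos hsple
  have hstep2 : M / Real.sqrt n = 3 * (C₀ + 1) := by
    rw [hMdef, mul_div_assoc, div_self hsqn.ne', mul_one]
  have hstep3 : M / Real.sqrt ((p:ℝ)+1) < Z a (t+1) ω / Real.sqrt ((p:ℝ)+1) :=
    (div_lt_div_iff_of_pos_right hsppos).2 hZa
  have hlower : C₀ < tsIndex μarm ξ Z A a (t+1) ω := by
    unfold tsIndex
    have h1 := (abs_le.1 (hmean a ((t+1)-1))).1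
    have hpulls : pulls A a ((t+1)-1) ω = p := by simp [hpdef]
    rw [hpulls]
    have : 3 * (C₀ + 1) ≤ Z a (t+1) ω / Real.sqrt ((p:ℝ)+1) := by
      calc 3 * (C₀ + 1) = M / Real.sqrt n := hstep2.symm
        _ ≤ M / Real.sqrt ((p:ℝ)+1) := hstep1
        _ ≤ Z a (t+1) ω / Real.sqrt ((p:ℝ)+1) := hstep3.le
    have hpulls' : pulls A a ((t+1)-1) ω = p := hpulls
    linarith
  have := hargmax ω (t+1) (by omega) a
  linarith

/-- From `Φ* < 1`: the measure of every `Iic` is `< 1`. -/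
lemma measure_Iic_lt_one (μZ : Measure ℝ) [IsProbabilityMeasure μZ]
    (h : ∀ z : ℝ, cdfStar μZ z < 1) (z : ℝ) : μZ (Set.Iic z) < 1 := by
  have hbdd : BddAbove (Set.range fun v : {v : ℝ × ℝ // v.1 ^ 2 + v.2 ^ 2 = 1} =>
      ((μZ.prod μZ) {p : ℝ × ℝ | v.1.1 * p.1 + v.1.2 * p.2 ≤ z}).toReal) := by
    refine ⟨1, ?_⟩
    rintro _ ⟨v, rfl⟩
    calc ((μZ.prod μZ) _).toReal ≤ (1 : ℝ≥0∞).toReal :=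
          ENNReal.toReal_mono ENNReal.one_ne_top prob_le_one
      _ = 1 := ENNReal.toReal_one
  have h1 : ((μZ.prod μZ) {p : ℝ × ℝ | (1:ℝ) * p.1 + (0:ℝ) * p.2 ≤ z}).toReal < 1 := by
    have := le_ciSup hbdd (⟨(1, 0), by norm_num⟩ : {v : ℝ × ℝ // v.1 ^ 2 + v.2 ^ 2 = 1})
    exact lt_of_le_of_lt this (h z)
  have hset : {p : ℝ × ℝ | (1:ℝ) * p.1 + (0:ℝ) * p.2 ≤ z} = Set.Iic z ×ˢ Set.univ := by
    ext p; simp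
  rw [hset, Measure.prod_prod, measure_univ, mul_one] at h1
  exact (ENNReal.toReal_lt_toReal (measure_ne_top _ _) ENNReal.one_ne_top).1
    (by simpa using h1)

/-- From `Φ* < 1`: the measure of every `Ici` is `< 1`. -/
lemma measure_Ici_lt_one (μZ : Measure ℝ) [IsProbabilityMeasure μZ]
    (h : ∀ z : ℝ, cdfStar μZ z < 1) (z : ℝ) : μZ (Set.Ici z) < 1 := by
  have hbdd : BddAbove (Set.range fun v : {v : ℝ × ℝ // v.1 ^ 2 + v.2 ^ 2 = 1} =>
      ((μZ.prod μZ) {p : ℝ × ℝ | v.1.1 * p.1 + v.1.2 * p.2 ≤ -z}).toReal) := by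
    refine ⟨1, ?_⟩
    rintro _ ⟨v, rfl⟩
    calc ((μZ.prod μZ) _).toReal ≤ (1 : ℝ≥0∞).toReal :=
          ENNReal.toReal_mono ENNReal.one_ne_top prob_le_one
      _ = 1 := ENNReal.toReal_one
  have h1 : ((μZ.prod μZ) {p : ℝ × ℝ | (-1:ℝ) * p.1 + (0:ℝ) * p.2 ≤ -z}).toReal < 1 := by
    have := le_ciSup hbdd (⟨(-1, 0), by norm_num⟩ : {v : ℝ × ℝ // v.1 ^ 2 + v.2 ^ 2 = 1})
    exact lt_of_le_of_lt this (h (-z))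
  have hset : {p : ℝ × ℝ | (-1:ℝ) * p.1 + (0:ℝ) * p.2 ≤ -z} = Set.Ici z ×ˢ Set.univ := by
    ext p
    simp only [Set.mem_setOf_eq, Set.mem_prod, Set.mem_Ici, Set.mem_univ, and_true]
    constructor <;> intro hh <;> linarith
  rw [hset, Measure.prod_prod, measure_univ, mul_one] at h1
  exact (ENNReal.toReal_lt_toReal (measure_ne_top _ _) ENNReal.one_ne_top).1
    (by simpa using h1)

lemma measure_Ioi_ne_zero (μZ : Measure ℝ) [IsProbabilityMeasure μZ]
    (h : ∀ z : ℝ, cdfStar μZ z < 1) (z : ℝ) : μZ (Set.Ioi z) ≠ 0 := by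
  have h1 := measure_Iic_lt_one μZ h z
  have hcompl : μZ (Set.Ioi z) = 1 - μZ (Set.Iic z) := by
    rw [← Set.compl_Iic, prob_compl_eq_one_sub measurableSet_Iic]
  rw [hcompl]
  simp only [ne_eq, tsub_eq_zero_iff_le, not_le]
  exact h1

lemma measure_Iic_zero_ne_zero (μZ : Measure ℝ) [IsProbabilityMeasure μZ]
    (h : ∀ z : ℝ, cdfStar μZ z < 1) : μZ (Set.Iic 0) ≠ 0 := by
  have h1 := measure_Ici_lt_one μZ h 0
  have hcompl : μZ (Set.Iio 0) = 1 - μZ (Set.Ici 0) := by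
    rw [← Set.compl_Ici, prob_compl_eq_one_sub measurableSet_Ici]
  have hne : μZ (Set.Iio 0) ≠ 0 := by
    rw [hcompl]
    simp only [ne_eq, tsub_eq_zero_iff_le, not_le]
    exact h1
  intro hzero
  exact hne (le_antisymm (le_trans (measure_mono Set.Iio_subset_Iic_self) hzero.le)
    zero_le)

/-- **Lemma (a.s. finiteness of the hitting times, Lemma 5.1).**
Suppose `Φ*(z) < 1` for every `z ∈ ℝ`.  Then for every arm `a`, every `n ≥ 0`, and every
noise realization in `E_ξ(∞)` (i.e. in `E_ξ(x)` for some finite `x`), the hitting time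
`τ_{a;n}` is `P^ξ`-a.s. finite and `n_{a;τ_{a;n}} = n` holds `P^ξ`-a.s.:
`P^ξ(τ_{a;n} < ∞) = P^ξ(n_{a;τ_{a;n}} = n) = 1`. -/
theorem hitTime_finite_as
    (P : Measure Ω) [IsProbabilityMeasure P]
    (μarm : Fin K → ℝ)
    (μZ : Measure ℝ) [IsProbabilityMeasure μZ]
    (hPhiStar : ∀ z : ℝ, cdfStar μZ z < 1)
    (ξ : Fin K → ℕ → ℝ) (hξ : ∃ x : ℝ, noiseEvent ξ x)
    (Z : Fin K → ℕ → Ω → ℝ) (A : ℕ → Ω → Fin K)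
    (hmodel : IsCondTSModel P μarm ξ Z A μZ) :
    ∀ (a : Fin K) (n : ℕ),
      P {ω | hitTime A a n ω < ⊤} = 1 ∧
      P {ω | ∃ t : ℕ, hitTime A a n ω = (t : ℕ∞) ∧ pulls A a t ω = n} = 1 := by
  classical
  obtain ⟨hZmeas, hAmeas, hind, hmap, hargmax⟩ := hmodel
  obtain ⟨x₀, hx₀⟩ := hξ
  set x := max x₀ 1 with hxdef
  have hx1 : (1:ℝ) ≤ x := le_max_right _ _
  have hx : noiseEvent ξ x := by
    intro b t ht
    refine lt_of_lt_of_le (hx₀ b t ht) ?_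
    have hs : (0:ℝ) ≤ Real.sqrt ((t:ℝ)+1) := Real.sqrt_nonneg _
    have hl : (0:ℝ) ≤ Real.log (max ((t:ℝ)+1) (Real.exp 1)) := by
      apply Real.log_nonneg
      refine le_trans ?_ (le_max_right _ _)
      have := Real.add_one_le_exp (1:ℝ)
      linarith
    have hxx : x₀ ≤ x := le_max_left _ _
    calc x₀ * Real.sqrt ((t:ℝ)+1) * Real.log (max ((t:ℝ)+1) (Real.exp 1))
        = x₀ * (Real.sqrt ((t:ℝ)+1) * Real.log (max ((t:ℝ)+1) (Real.exp 1))) := by ring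
      _ ≤ x * (Real.sqrt ((t:ℝ)+1) * Real.log (max ((t:ℝ)+1) (Real.exp 1))) :=
          mul_le_mul_of_nonneg_right hxx (mul_nonneg hs hl)
      _ = x * Real.sqrt ((t:ℝ)+1) * Real.log (max ((t:ℝ)+1) (Real.exp 1)) := by ring
  intro a n
  -- the good events
  set M := 3 * ((∑ c, |μarm c|) + 4 * x + 1) * Real.sqrt n with hMdef
  set sets0 : Fin K → Set ℝ := fun b => if b = a then Set.Ioi M else Set.Iic 0 with hsets0
  have hsets0meas : ∀ b, MeasurableSet (sets0 b) := by
    intro b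
    simp only [hsets0]
    split
    · exact measurableSet_Ioi
    · exact measurableSet_Iic
  set G : ℕ → Set Ω := fun t => ⋂ b : Fin K, Z b (t+1) ⁻¹' sets0 b with hGdef
  have hGmeas : ∀ t, MeasurableSet (G t) :=
    fun t => MeasurableSet.iInter fun b => (hZmeas b (t+1)) (hsets0meas b)
  have hGa : ∀ t ω, ω ∈ G t → M < Z a (t+1) ω := by
    intro t ω h
    have := Set.mem_iInter.1 h a
    simpa [hsets0] using this
  have hGb : ∀ t ω, ω ∈ G t → ∀ b, b ≠ a → Z b (t+1) ω ≤ 0 := by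
    intro t ω h b hb
    have := Set.mem_iInter.1 h b
    simpa [hsets0, hb] using this
  -- independence computation
  set emb : ℕ ↪ {t : ℕ // 1 ≤ t} :=
    ⟨fun t => ⟨t + 1, Nat.succ_le_succ (Nat.zero_le _)⟩, by
      intro u v h
      simpa using congrArg Subtype.val h⟩ with hemb
  have hprodform : ∀ s : Finset ℕ, P (⋂ t ∈ s, G t) =
      ∏ t ∈ s, ∏ b : Fin K, P (Z b (t+1) ⁻¹' sets0 b) := by
    intro s
    have hmeas' : ∀ p : Fin K × {t : ℕ // 1 ≤ t},
        p ∈ (Finset.univ ×ˢ s.map emb) → MeasurableSet (sets0 p.1) :=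
      fun p _ => hsets0meas p.1
    have hcalc := hind.measure_inter_preimage_eq_mul (Finset.univ ×ˢ s.map emb)
      (sets := fun p => sets0 p.1) hmeas'
    have hsetEq : (⋂ p ∈ (Finset.univ ×ˢ s.map emb),
        (fun p : Fin K × {t : ℕ // 1 ≤ t} => Z p.1 p.2) p ⁻¹' sets0 p.1) = ⋂ t ∈ s, G t := by
      ext ω
      simp only [Set.mem_iInter, Finset.mem_product, Finset.mem_map, Finset.mem_univ,
        true_and, Set.mem_preimage, hGdef]
      constructor
      · intro h t ht
        exact fun b => h (b, emb t) ⟨t, ht, rfl⟩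
      · rintro h ⟨b, t'⟩ ⟨t, ht, rfl⟩
        exact h t ht b
    rw [hsetEq] at hcalc
    rw [hcalc, Finset.prod_product_right, Finset.prod_map]
    rfl
  have hsingle : ∀ t : ℕ, P (G t) = ∏ b : Fin K, P (Z b (t+1) ⁻¹' sets0 b) := by
    intro t
    have := hprodform {t}
    simpa using this
  have hiIndep : iIndepSet G P := by
    refine (iIndepSet_iff_meas_biInter hGmeas).2 fun s => ?_
    rw [hprodform s]
    exact Finset.prod_congr rfl fun t _ => (hsingle t).symm
  -- each good event has constant nonzero probability
  have hmeasval : ∀ (b : Fin K) (t : ℕ), P (Z b (t+1) ⁻¹' sets0 b) = μZ (sets0 b) := by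
    intro b t
    rw [← hmap b (t+1) (by omega), Measure.map_apply (hZmeas b (t+1)) (hsets0meas b)]
  set c : ℝ≥0∞ := ∏ b : Fin K, μZ (sets0 b) with hc
  have hGc : ∀ t, P (G t) = c := by
    intro t
    rw [hsingle t, hc]
    exact Finset.prod_congr rfl fun b _ => hmeasval b t
  have hcne : c ≠ 0 := by
    rw [hc]
    rw [Finset.prod_ne_zero_iff]
    intro b _
    by_cases hb : b = a
    · simpa [hsets0, hb] using measure_Ioi_ne_zero μZ hPhiStar M
    · simpa [hsets0, hb] using measure_Iic_zero_ne_zero μZ hPhiStar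
  have htsum : (∑' t, P (G t)) = ∞ := by
    simp only [hGc]
    exact ENNReal.tsum_const_eq_top_of_ne_zero hcne
  have hlim : P (limsup G atTop) = 1 :=
    ProbabilityTheory.measure_limsup_eq_one hGmeas hiIndep htsum
  -- pointwise: on the limsup event, arm `a` reaches `n` pulls
  have hsubset : limsup G atTop ⊆ {ω | ∃ t, n ≤ pulls A a t ω} := by
    intro ω hω
    have hfreq : ∀ N : ℕ, ∃ t, N ≤ t ∧ ω ∈ G t := by
      have h1 : ∃ᶠ t in atTop, ω ∈ G t := mem_limsup_iff_frequently_mem.1 hω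
      intro N
      obtain ⟨t, ht, hmem⟩ := (frequently_atTop.1 h1) N
      exact ⟨t, ht, hmem⟩
    have main : ∀ k : ℕ, ∃ t, min k n ≤ pulls A a t ω := by
      intro k
      induction k with
      | zero => exact ⟨0, by simp⟩
      | succ k ih =>
        obtain ⟨t₀, ht₀⟩ := ih
        by_cases hn : n ≤ pulls A a t₀ ω
        · exact ⟨t₀, le_trans (min_le_right _ _) hn⟩
        · obtain ⟨t, htt₀, hGt⟩ := hfreq t₀
          by_cases h2 : n ≤ pulls A a t ω
          · exact ⟨t, le_trans (min_le_right _ _) h2⟩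
          · push_neg at h2
            have hA : A (t+1) ω = a :=
              good_round_pull μarm ξ Z A hargmax hx hx1 a n ω t h2
                (hGa t ω hGt) (hGb t ω hGt)
            refine ⟨t+1, ?_⟩
            have hmono := pulls_mono A a htt₀ ω
            have hstep : pulls A a (t+1) ω = pulls A a t ω + 1 := by
              rw [pulls_succ A a t ω, if_pos hA]
            omega
    obtain ⟨t, ht⟩ := main n
    exact ⟨t, by simpa using ht⟩
  have hE : P {ω | ∃ t, n ≤ pulls A a t ω} = 1 :=
    le_antisymm prob_le_one (hlim ▸ measure_mono hsubset)
  -- conclude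
  have hsub1 : {ω | ∃ t, n ≤ pulls A a t ω} ⊆ {ω | hitTime A a n ω < ⊤} := by
    rintro ω ⟨t, ht⟩
    have hle : hitTime A a n ω ≤ (t : ℕ∞) := sInf_le ⟨t, ht, rfl⟩
    exact lt_of_le_of_lt hle (WithTop.coe_lt_top t)
  have hsub2 : {ω | ∃ t, n ≤ pulls A a t ω} ⊆
      {ω | ∃ t : ℕ, hitTime A a n ω = (t : ℕ∞) ∧ pulls A a t ω = n} := by
    rintro ω ⟨t, ht⟩
    set S : Set ℕ := {t | n ≤ pulls A a t ω} with hS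
    have hne : S.Nonempty := ⟨t, ht⟩
    refine ⟨sInf S, ?_, ?_⟩
    · apply le_antisymm
      · exact sInf_le ⟨sInf S, Nat.sInf_mem hne, rfl⟩
      · apply le_sInf
        rintro y ⟨u, hu, rfl⟩
        show ((sInf S : ℕ) : ℕ∞) ≤ (u : ℕ∞)
        exact Nat.cast_le.2 (Nat.sInf_le hu)
    · have h1 : n ≤ pulls A a (sInf S) ω := Nat.sInf_mem hne
      refine le_antisymm ?_ h1
      rcases Nat.eq_zero_or_pos (sInf S) with h0 | hpos
      · rw [h0, pulls_zero]
        exact Nat.zero_le _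
      · obtain ⟨u, hu⟩ : ∃ u, sInf S = u + 1 := ⟨sInf S - 1, by omega⟩
        have hnot : u ∉ S := Nat.notMem_of_lt_sInf (by omega)
        have hlt : pulls A a u ω < n := by
          by_contra hcon
          exact hnot (le_of_not_gt hcon)
        have hstep : pulls A a (u+1) ω ≤ pulls A a u ω + 1 := by
          rw [pulls_succ A a u ω]
          split <;> omega
        rw [hu]
        omega
  constructor
  · exact le_antisymm prob_le_one (hE ▸ measure_mono hsub1)
  · exact le_antisymm prob_le_one (hE ▸ measure_mono hsub2)

end ThompsonSamplingCond
end

section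
/- Let Z be a real random variable with c.d.f. Φ such that Φ(z) ∈ (0,1) for all z ∈ ℝ, and let Z' be an independent copy of Z. Define Φ*(z) = sup_{(a,a') : a² + a'² = 1} P(aZ + a'Z' ≤ z) and Ψ*(z) = inf_{(a,a') : a² + a'² = 1} P(aZ + a'Z' ≤ z). Then for every B > 0, sup_{z ∈ [−B,B]} max{ Φ*(z), 1 − Ψ*(z) } < 1. -/
open MeasureTheory ProbabilityTheory

lemma aux_compl_toReal {α : Type*} [MeasurableSpace α] (ν : Measure α)
    [IsProbabilityMeasure ν] {S : Set α} (hS : MeasurableSet S) :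
    (ν S).toReal + (ν Sᶜ).toReal = 1 := by
  have h := measure_add_measure_compl (μ := ν) hS
  rw [measure_univ] at h
  have h2 := congrArg ENNReal.toReal h
  rwa [ENNReal.toReal_add (measure_ne_top _ _) (measure_ne_top _ _),
    ENNReal.toReal_one] at h2


lemma aux_unit {a s : ℝ} (hca : 1/2 ≤ a ^ 2) (hsa : 0 ≤ a) (hs2 : s ^ 2 = 2)
    (hs0 : 0 < s) : 1 ≤ a * s := by
  nlinarith [mul_nonneg hsa hs0.le]

lemma aux_tail {a s x C : ℝ} (hsa : 0 ≤ a) (h1 : 1 ≤ a * s) (hC : 0 ≤ C)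
    (hx : s * C ≤ x) (hs0 : 0 < s) : C ≤ a * x := by
  nlinarith [mul_le_mul_of_nonneg_left hx hsa, mul_le_mul_of_nonneg_right h1 hC]

lemma aux_mid {a y M : ℝ} (h1 : -1 ≤ a) (h2 : a ≤ 1) (h3 : -M ≤ y) (h4 : y ≤ M) :
    -M ≤ a * y := by
  nlinarith [mul_nonneg (by linarith : (0:ℝ) ≤ 1 - a) (by linarith : (0:ℝ) ≤ M - y),
    mul_nonneg (by linarith : (0:ℝ) ≤ 1 + a) (by linarith : (0:ℝ) ≤ M + y)]

set_option maxHeartbeats 1000000 in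
/-- **Uniform non-degeneracy of the convolved c.d.f.'s.**
Let `Z` be a real random variable with c.d.f. `Φ` (here represented by its law `μ`,
a Borel probability measure on `ℝ`) such that `Φ(z) ∈ (0,1)` for all `z`.  With `Z'` an
independent copy of `Z` (so that the pair `(Z,Z')` has law `μ.prod μ`), set
`Φ*(z) = sup_{a²+a'²=1} P(aZ + a'Z' ≤ z)` and `Ψ*(z) = inf_{a²+a'²=1} P(aZ + a'Z' ≤ z)`.
Then for every `B > 0`, `sup_{z∈[−B,B]} max{Φ*(z), 1 − Ψ*(z)} < 1`. -/
theorem sup_PhiStar_PsiStar_lt_one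
    (μ : Measure ℝ) [IsProbabilityMeasure μ]
    (hΦpos : ∀ z : ℝ, 0 < (μ (Set.Iic z)).toReal)
    (hΦlt : ∀ z : ℝ, (μ (Set.Iic z)).toReal < 1)
    (Φstar Ψstar : ℝ → ℝ)
    (hΦstar : ∀ z : ℝ, Φstar z =
      ⨆ v : {v : ℝ × ℝ // v.1 ^ 2 + v.2 ^ 2 = 1},
        ((μ.prod μ) {p : ℝ × ℝ | v.1.1 * p.1 + v.1.2 * p.2 ≤ z}).toReal)
    (hΨstar : ∀ z : ℝ, Ψstar z =
      ⨅ v : {v : ℝ × ℝ // v.1 ^ 2 + v.2 ^ 2 = 1},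
        ((μ.prod μ) {p : ℝ × ℝ | v.1.1 * p.1 + v.1.2 * p.2 ≤ z}).toReal) :
    ∀ B : ℝ, 0 < B → ∃ c : ℝ, c < 1 ∧
      ∀ z ∈ Set.Icc (-B) B, max (Φstar z) (1 - Ψstar z) ≤ c := by
  intro B hB
  haveI : Nonempty {v : ℝ × ℝ // v.1 ^ 2 + v.2 ^ 2 = 1} :=
    ⟨⟨(1, 0), by norm_num⟩⟩
  -- choose M with μ(Icc (-M) M) ≥ 1/2 and M ≥ 0
  obtain ⟨M, hM0, hq⟩ : ∃ M : ℝ, 0 ≤ M ∧ (1:ℝ)/2 ≤ (μ (Set.Icc (-M) M)).toReal := by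
    have h1 : Filter.Tendsto (fun r : ℝ => (μ (Set.Iic r)).toReal)
        Filter.atTop (nhds 1) := by
      have h := tendsto_measure_Iic_atTop (μ := μ)
      rw [measure_univ] at h
      have := (ENNReal.tendsto_toReal (a := 1) (by simp)).comp h
      simpa [Function.comp_def] using this
    have h2 : Filter.Tendsto (fun r : ℝ => (μ (Set.Ici r)).toReal)
        Filter.atBot (nhds 1) := by
      have h := tendsto_measure_Ici_atBot (μ := μ)
      rw [measure_univ] at h
      have := (ENNReal.tendsto_toReal (a := 1) (by simp)).comp h
      simpa [Function.comp_def] using this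
    obtain ⟨M1, hM1⟩ := (h1.eventually (eventually_gt_nhds
      (by norm_num : (3/4 : ℝ) < 1))).exists
    obtain ⟨t, ht⟩ := (h2.eventually (eventually_gt_nhds
      (by norm_num : (3/4 : ℝ) < 1))).exists
    refine ⟨max M1 (max (1 - t) 0), le_max_of_le_right (le_max_right _ _), ?_⟩
    set M := max M1 (max (1 - t) 0) with hMdef
    have hMM1 : M1 ≤ M := le_max_left _ _
    have hMt : t > -M := by
      have : 1 - t ≤ M := le_trans (le_max_left _ _) (le_max_right _ _)
      linarith
    -- μ(Iic M) ≥ μ(Iic M1) > 3/4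
    have hIicM : (3/4 : ℝ) < (μ (Set.Iic M)).toReal :=
      lt_of_lt_of_le hM1 (ENNReal.toReal_mono (measure_ne_top _ _)
        (measure_mono (Set.Iic_subset_Iic.mpr hMM1)))
    -- μ(Iic (-M)) + μ(Ici t) ≤ 1, so μ(Iic (-M)) < 1/4
    have hdisj : Disjoint (Set.Iic (-M)) (Set.Ici t) := by
      rw [Set.disjoint_left]
      intro x hx hx'
      simp only [Set.mem_Iic, Set.mem_Ici] at hx hx'
      linarith
    have hadd : (μ (Set.Iic (-M))).toReal + (μ (Set.Ici t)).toReal ≤ 1 := by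
      have h3 : μ (Set.Iic (-M)) + μ (Set.Ici t) ≤ 1 := by
        rw [← measure_union hdisj measurableSet_Ici]
        exact prob_le_one
      have h4 := ENNReal.toReal_mono (by simp) h3
      rwa [ENNReal.toReal_add (measure_ne_top _ _) (measure_ne_top _ _),
        ENNReal.toReal_one] at h4
    have hIicmM : (μ (Set.Iic (-M))).toReal < 1/4 := by linarith
    -- Iic M ⊆ Iic (-M) ∪ Icc (-M) M
    have hsub : Set.Iic M ⊆ Set.Iic (-M) ∪ Set.Icc (-M) M := by
      intro x hx
      rcases le_or_gt x (-M) with h | h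
      · exact Or.inl h
      · exact Or.inr ⟨h.le, hx⟩
    have hsub2 : (μ (Set.Iic M)).toReal ≤
        (μ (Set.Iic (-M))).toReal + (μ (Set.Icc (-M) M)).toReal := by
      have h3 : μ (Set.Iic M) ≤ μ (Set.Iic (-M)) + μ (Set.Icc (-M) M) :=
        (measure_mono hsub).trans (measure_union_le _ _)
      have h4 := ENNReal.toReal_mono
        (ENNReal.add_ne_top.mpr ⟨measure_ne_top _ _, measure_ne_top _ _⟩) h3
      rwa [ENNReal.toReal_add (measure_ne_top _ _) (measure_ne_top _ _)] at h4
    linarith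
  set s := Real.sqrt 2 with hs_def
  have hs2 : s ^ 2 = 2 := Real.sq_sqrt (by norm_num)
  have hs0 : 0 < s := Real.sqrt_pos.mpr (by norm_num)
  set K := s * (B + M + 1) with hK
  set p := min ((μ (Set.Iic (-K))).toReal) ((μ (Set.Ioi K)).toReal) with hp
  set q := (μ (Set.Icc (-M) M)).toReal with hqdef
  have hsplitK : (μ (Set.Iic K)).toReal + (μ (Set.Ioi K)).toReal = 1 := by
    have := aux_compl_toReal μ (measurableSet_Iic (a := K))
    rwa [Set.compl_Iic] at this
  have hp0 : 0 < p := lt_min (hΦpos _) (by linarith [hΦlt K])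
  have hq0 : 0 < q := by linarith
  have hq1 : q ≤ 1 := by
    have := ENNReal.toReal_mono (by simp) (prob_le_one (μ := μ) (s := Set.Icc (-M) M))
    simpa using this
  have hp1 : p ≤ 1 := by
    have := ENNReal.toReal_mono (by simp) (prob_le_one (μ := μ) (s := Set.Iic (-K)))
    simp only [ENNReal.toReal_one] at this
    exact le_trans (min_le_left _ _) this
  have hIicK : p ≤ (μ (Set.Iic (-K))).toReal := min_le_left _ _
  have hIoiK : p ≤ (μ (Set.Ioi K)).toReal := min_le_right _ _
  -- product estimate
  have hprod : ∀ (E F : Set ℝ) (S : Set (ℝ × ℝ)), E ×ˢ F ⊆ S →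
      (μ E).toReal * (μ F).toReal ≤ ((μ.prod μ) S).toReal := by
    intro E F S hsub
    rw [← ENNReal.toReal_mul, ← Measure.prod_prod]
    exact ENNReal.toReal_mono (measure_ne_top _ _) (measure_mono hsub)
  have hSmeas : ∀ (a a' zz : ℝ),
      MeasurableSet {p : ℝ × ℝ | a * p.1 + a' * p.2 ≤ zz} :=
    fun a a' zz => measurableSet_le
      ((measurable_fst.const_mul a).add (measurable_snd.const_mul a')) measurable_const
  -- master lemma : for every unit vector there are sets E, F with
  -- μE * μF ≥ p*q and a*x + a'*y ≥ B + 1 on E × F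
  have master : ∀ a a' : ℝ, a ^ 2 + a' ^ 2 = 1 →
      ∃ E F : Set ℝ, p * q ≤ (μ E).toReal * (μ F).toReal ∧
        ∀ x ∈ E, ∀ y ∈ F, B + 1 ≤ a * x + a' * y := by
    intro a a' hv
    have ha2 : a ^ 2 ≤ 1 := by nlinarith [sq_nonneg a']
    have ha'2 : a' ^ 2 ≤ 1 := by nlinarith [sq_nonneg a]
    have ha1 : a ≤ 1 := by nlinarith
    have ham1 : -1 ≤ a := by nlinarith
    have ha'1 : a' ≤ 1 := by nlinarith
    have ha'm1 : -1 ≤ a' := by nlinarith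
    have hBM : (0:ℝ) ≤ B + M + 1 := by linarith
    rcases le_or_gt (1/2) (a ^ 2) with hca | hca
    · rcases le_or_gt 0 a with hsa | hsa
      · refine ⟨Set.Ioi K, Set.Icc (-M) M, ?_, ?_⟩
        · exact mul_le_mul hIoiK le_rfl hq0.le ENNReal.toReal_nonneg
        · intro x hx y hy
          rw [Set.mem_Ioi] at hx
          obtain ⟨hy1, hy2⟩ := hy
          have h1 : 1 ≤ a * s := aux_unit hca hsa hs2 hs0
          have h2 : B + M + 1 ≤ a * x := aux_tail hsa h1 hBM (by rw [hK] at hx; linarith) hs0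
          have h3 : -M ≤ a' * y := aux_mid ha'm1 ha'1 hy1 hy2
          linarith
      · refine ⟨Set.Iic (-K), Set.Icc (-M) M, ?_, ?_⟩
        · exact mul_le_mul hIicK le_rfl hq0.le ENNReal.toReal_nonneg
        · intro x hx y hy
          rw [Set.mem_Iic] at hx
          obtain ⟨hy1, hy2⟩ := hy
          have h1 : 1 ≤ (-a) * s := aux_unit (by nlinarith : (1:ℝ)/2 ≤ (-a) ^ 2) (by linarith) hs2 hs0
          have h2 : B + M + 1 ≤ (-a) * (-x) := aux_tail (by linarith) h1 hBM (by rw [hK] at hx; linarith) hs0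
          have h2' : B + M + 1 ≤ a * x := by rw [neg_mul_neg] at h2; exact h2
          have h3 : -M ≤ a' * y := aux_mid ha'm1 ha'1 hy1 hy2
          linarith
    · have hca' : (1/2 : ℝ) ≤ a' ^ 2 := by nlinarith
      rcases le_or_gt 0 a' with hsa | hsa
      · refine ⟨Set.Icc (-M) M, Set.Ioi K, ?_, ?_⟩
        · calc p * q = q * p := mul_comm _ _
            _ ≤ (μ (Set.Icc (-M) M)).toReal * (μ (Set.Ioi K)).toReal :=
              mul_le_mul le_rfl hIoiK hp0.le hq0.le
        · intro x hx y hy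
          rw [Set.mem_Ioi] at hy
          obtain ⟨hx1, hx2⟩ := hx
          have h1 : 1 ≤ a' * s := aux_unit hca' hsa hs2 hs0
          have h2 : B + M + 1 ≤ a' * y := aux_tail hsa h1 hBM (by rw [hK] at hy; linarith) hs0
          have h3 : -M ≤ a * x := aux_mid ham1 ha1 hx1 hx2
          linarith
      · refine ⟨Set.Icc (-M) M, Set.Iic (-K), ?_, ?_⟩
        · calc p * q = q * p := mul_comm _ _
            _ ≤ (μ (Set.Icc (-M) M)).toReal * (μ (Set.Iic (-K))).toReal :=
              mul_le_mul le_rfl hIicK hp0.le hq0.le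
        · intro x hx y hy
          rw [Set.mem_Iic] at hy
          obtain ⟨hx1, hx2⟩ := hx
          have h1 : 1 ≤ (-a') * s := aux_unit (by nlinarith : (1:ℝ)/2 ≤ (-a') ^ 2) (by linarith) hs2 hs0
          have h2 : B + M + 1 ≤ (-a') * (-y) := aux_tail (by linarith) h1 hBM (by rw [hK] at hy; linarith) hs0
          have h2' : B + M + 1 ≤ a' * y := by rw [neg_mul_neg] at h2; exact h2
          have h3 : -M ≤ a * x := aux_mid ham1 ha1 hx1 hx2
          linarith
  -- key estimates
  have key1 : ∀ (a a' zz : ℝ), a ^ 2 + a' ^ 2 = 1 → zz ≤ B →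
      ((μ.prod μ) {p : ℝ × ℝ | a * p.1 + a' * p.2 ≤ zz}).toReal ≤ 1 - p * q := by
    intro a a' zz hv hzB
    obtain ⟨E, F, hpq, hEF⟩ := master a a' hv
    have hsub : E ×ˢ F ⊆ {p : ℝ × ℝ | a * p.1 + a' * p.2 ≤ zz}ᶜ := by
      rintro ⟨x, y⟩ ⟨hx, hy⟩
      simp only [Set.mem_compl_iff, Set.mem_setOf_eq, not_le]
      have := hEF x hx y hy
      linarith
    have h1 : p * q ≤ ((μ.prod μ) {p : ℝ × ℝ | a * p.1 + a' * p.2 ≤ zz}ᶜ).toReal :=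
      le_trans hpq (hprod E F _ hsub)
    have h2 := aux_compl_toReal (μ.prod μ) (hSmeas a a' zz)
    linarith
  have key2 : ∀ (a a' zz : ℝ), a ^ 2 + a' ^ 2 = 1 → -B ≤ zz →
      p * q ≤ ((μ.prod μ) {p : ℝ × ℝ | a * p.1 + a' * p.2 ≤ zz}).toReal := by
    intro a a' zz hv hzB
    obtain ⟨E, F, hpq, hEF⟩ := master (-a) (-a') (by linear_combination hv)
    have hsub : E ×ˢ F ⊆ {p : ℝ × ℝ | a * p.1 + a' * p.2 ≤ zz} := by
      rintro ⟨x, y⟩ ⟨hx, hy⟩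
      simp only [Set.mem_setOf_eq]
      have h' := hEF x hx y hy
      have h'' : -a * x + -a' * y = -(a * x + a' * y) := by ring
      rw [h''] at h'
      linarith
    exact le_trans hpq (hprod E F _ hsub)
  refine ⟨1 - p * q, by nlinarith [mul_pos hp0 hq0], ?_⟩
  intro z hz
  rw [Set.mem_Icc] at hz
  refine max_le ?_ ?_
  · rw [hΦstar]
    exact ciSup_le fun v => key1 v.1.1 v.1.2 z v.2 hz.2
  · have h : p * q ≤ Ψstar z := by
      rw [hΨstar]
      exact le_ciInf fun v => key2 v.1.1 v.1.2 z v.2 hz.1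
    linarith
end
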